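/- arXiv:math/0510296 — 7 statements merged into one kernel-verified Lean document; each statement's English description precedes it below -/
import Mathlib

section
/- Let $G$ be a group and let $a, g \in G$ be such that the normal closure of $\langle a\rangle$ in $\langle a, g\rangle$ is abelian. If $[a, g^{t_1}, g^{t_2}, \dots, g^{t_k}] = 1$ for some positive integers $t_1, \dots, t_k$, then $[a,{}_k\, g^m] = 1$ for every positive integer $m$ divisible by the least common multiple of $t_1, \dots, t_k$. -/
open scoped commutatorElement

/-- Iterated commutator `[x, y, y, ..., y]` with `y` repeated `k` times (`engel x y 0 = x`). -/
def engel {G : Type*} [Group G] (x y : G) : ℕ → G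
  | 0 => x
  | k + 1 => ⁅engel x y k, y⁆

/-- Left-normed iterated commutator `[x, l₁, l₂, ..., lₙ]`. -/
def lcomm {G : Type*} [Group G] (x : G) (l : List G) : G :=
  l.foldl (fun u v => ⁅u, v⁆) x

/-- `x` is a left Engel element of `G`. -/
def IsLeftEngel (G : Type*) [Group G] (x : G) : Prop :=
  ∀ a : G, ∃ k : ℕ, 0 < k ∧ engel a x k = 1

section Aux

variable {G : Type*} [Group G]

/-- Closure of the set of `g`-power conjugates of `w`. -/
def Sg (g w : G) : Subgroup G :=
  Subgroup.closure { x | ∃ j : ℤ, x = (g ^ j)⁻¹ * w * g ^ j }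

lemma mem_Sg (g w : G) (j : ℤ) : (g ^ j)⁻¹ * w * g ^ j ∈ Sg g w :=
  Subgroup.subset_closure ⟨j, rfl⟩

lemma self_mem_Sg (g w : G) : w ∈ Sg g w := by
  simpa using mem_Sg g w 0

lemma Sg_conj (g w : G) (j : ℤ) : ∀ x ∈ Sg g w, (g ^ j)⁻¹ * x * g ^ j ∈ Sg g w := by
  intro x hx
  induction hx using Subgroup.closure_induction with
  | mem y hy =>
    obtain ⟨i, rfl⟩ := hy
    have : (g ^ j)⁻¹ * ((g ^ i)⁻¹ * w * g ^ i) * g ^ j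
        = (g ^ (i + j))⁻¹ * w * g ^ (i + j) := by
      rw [zpow_add]; group
    rw [this]; exact mem_Sg g w _
  | one => simpa using Subgroup.one_mem _
  | mul x y hx hy px py =>
    have : (g ^ j)⁻¹ * (x * y) * g ^ j
        = ((g ^ j)⁻¹ * x * g ^ j) * ((g ^ j)⁻¹ * y * g ^ j) := by group
    rw [this]; exact mul_mem px py
  | inv x hx px =>
    have : (g ^ j)⁻¹ * x⁻¹ * g ^ j = ((g ^ j)⁻¹ * x * g ^ j)⁻¹ := by group
    rw [this]; exact inv_mem px

lemma Sg_one_eq_bot (g : G) : Sg g 1 = ⊥ := by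
  apply le_antisymm _ bot_le
  rw [Sg, Subgroup.closure_le]
  rintro x ⟨j, rfl⟩
  simp [Subgroup.mem_bot]

/-- commutator of product identity -/
lemma comm_mul_right (u b c : G) : ⁅u, b * c⁆ = ⁅u, b⁆ * (b * ⁅u, c⁆ * b⁻¹) := by
  simp only [commutatorElement_def]; group

lemma comm_mul_left (x y z : G) : ⁅x * y, z⁆ = (x * ⁅y, z⁆ * x⁻¹) * ⁅x, z⁆ := by
  simp only [commutatorElement_def]; group

lemma comm_inv_left (x z : G) : ⁅x⁻¹, z⁆ = x⁻¹ * ⁅x, z⁆⁻¹ * x := by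
  simp only [commutatorElement_def]; group

/-- Conjugation by an element commuting with `z` commutes with `⁅·, z⁆`. -/
lemma comm_conj (h x z : G) (hc : Commute h z) :
    ⁅h⁻¹ * x * h, z⁆ = h⁻¹ * ⁅x, z⁆ * h := by
  have hz : h⁻¹ * z * h = z := by
    rw [mul_assoc, ← hc.eq, inv_mul_cancel_left]
  have := map_commutatorElement (MulAut.conj h⁻¹) x z
  simp only [MulAut.conj_apply, inv_inv, hz] at this
  exact this.symm

/-- Telescoping: if `t ∣ m` then `⁅u, g^m⁆` lies in the closure of `g`-conjugates of `⁅u, g^t⁆`. -/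
lemma comm_pow_dvd (g u : G) {t m : ℕ} (h : t ∣ m) :
    ⁅u, g ^ m⁆ ∈ Sg g ⁅u, g ^ t⁆ := by
  obtain ⟨q, rfl⟩ := h
  induction q with
  | zero => simpa using Subgroup.one_mem _
  | succ q ih =>
    have hpow : g ^ (t * (q + 1)) = g ^ (t * q) * g ^ t := by
      rw [← pow_add]; ring_nf
    rw [hpow, comm_mul_right]
    refine mul_mem ih ?_
    have := mem_Sg g ⁅u, g ^ t⁆ (-(t * q : ℕ) : ℤ)
    rw [zpow_neg, zpow_natCast, inv_inv] at this
    exact this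

end Aux

section Main

variable {G : Type*} [Group G] (a g : G)

private def Hgrp (a g : G) : Subgroup G := Subgroup.closure ({a, g} : Set G)

private def Ngrp (a g : G) : Subgroup G :=
  Subgroup.closure { x | ∃ h ∈ Hgrp a g, x = h⁻¹ * a * h }

lemma a_mem_H : a ∈ Hgrp a g := Subgroup.subset_closure (by simp)
lemma g_mem_H : g ∈ Hgrp a g := Subgroup.subset_closure (by simp)

lemma a_mem_N : a ∈ Ngrp a g := by
  refine Subgroup.subset_closure ⟨1, one_mem _, by simp⟩

lemma N_conj : ∀ x ∈ Ngrp a g, ∀ h ∈ Hgrp a g, h⁻¹ * x * h ∈ Ngrp a g := by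
  intro x hx
  induction hx using Subgroup.closure_induction with
  | mem y hy =>
    obtain ⟨h', hh', rfl⟩ := hy
    intro h hh
    have : h⁻¹ * (h'⁻¹ * a * h') * h = (h' * h)⁻¹ * a * (h' * h) := by group
    rw [this]
    exact Subgroup.subset_closure ⟨h' * h, mul_mem hh' hh, rfl⟩
  | one => intro h hh; simpa using Subgroup.one_mem _
  | mul x y hx hy px py =>
    intro h hh
    have : h⁻¹ * (x * y) * h = (h⁻¹ * x * h) * (h⁻¹ * y * h) := by group
    rw [this]; exact mul_mem (px h hh) (py h hh)
  | inv x hx px =>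
    intro h hh
    have : h⁻¹ * x⁻¹ * h = (h⁻¹ * x * h)⁻¹ := by group
    rw [this]; exact inv_mem (px h hh)

lemma N_comm
    (habel : ∀ u ∈ Subgroup.closure ({a, g} : Set G),
      ∀ v ∈ Subgroup.closure ({a, g} : Set G),
      Commute (u⁻¹ * a * u) (v⁻¹ * a * v)) :
    ∀ x ∈ Ngrp a g, ∀ y ∈ Ngrp a g, Commute x y := by
  intro x hx y hy
  induction hx, hy using Subgroup.closure_induction₂ with
  | mem x y hx hy =>
    obtain ⟨h1, hh1, rfl⟩ := hx
    obtain ⟨h2, hh2, rfl⟩ := hy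
    exact habel h1 hh1 h2 hh2
  | one_left x hx => exact Commute.one_left x
  | one_right x hx => exact Commute.one_right x
  | mul_left x y z _ _ _ p q => exact p.mul_left q
  | mul_right y z x _ _ _ p q => exact p.mul_right q
  | inv_left x y _ _ p => exact p.inv_left
  | inv_right x y _ _ p => exact p.inv_right

lemma comm_mem_N (x : G) (hx : x ∈ Ngrp a g) (w : G) (hw : w ∈ Hgrp a g) :
    ⁅x, w⁆ ∈ Ngrp a g := by
  have : ⁅x, w⁆ = x * ((w⁻¹)⁻¹ * x * w⁻¹)⁻¹ := by
    simp only [commutatorElement_def]; group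
  rw [this]
  exact mul_mem hx (inv_mem (N_conj a g x hx w⁻¹ (inv_mem hw)))

/-- Key step: if `u ∈ N`, `t ∣ m`, then for every `v` in the `g`-conjugate closure of `u`,
`⁅v, g^m⁆` lies in the `g`-conjugate closure of `⁅u, g^t⁆`. -/
lemma key_step
    (habel : ∀ u ∈ Subgroup.closure ({a, g} : Set G),
      ∀ v ∈ Subgroup.closure ({a, g} : Set G),
      Commute (u⁻¹ * a * u) (v⁻¹ * a * v))
    (u : G) (hu : u ∈ Ngrp a g) {t m : ℕ} (htm : t ∣ m) :
    ∀ v ∈ Sg g u, v ∈ Ngrp a g ∧ ⁅v, g ^ m⁆ ∈ Sg g ⁅u, g ^ t⁆ := by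
  have hgm : g ^ m ∈ Hgrp a g := pow_mem (g_mem_H a g) m
  intro v hv
  induction hv using Subgroup.closure_induction with
  | mem y hy =>
    obtain ⟨j, rfl⟩ := hy
    have hgj : g ^ j ∈ Hgrp a g := zpow_mem (g_mem_H a g) j
    constructor
    · exact N_conj a g u hu _ hgj
    · have hcm : Commute (g ^ j) (g ^ m) := ((Commute.refl g).pow_right m).zpow_left j
      rw [comm_conj _ _ _ hcm]
      exact Sg_conj g _ j _ (comm_pow_dvd g u htm)
  | one => exact ⟨one_mem _, by simpa using Subgroup.one_mem _⟩
  | mul x y hx hy px py =>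
    refine ⟨mul_mem px.1 py.1, ?_⟩
    have hyz : ⁅y, g ^ m⁆ ∈ Ngrp a g := comm_mem_N a g y py.1 _ hgm
    have hcomm2 : Commute x ⁅y, g ^ m⁆ := N_comm a g habel _ px.1 _ hyz
    have : ⁅x * y, g ^ m⁆ = ⁅y, g ^ m⁆ * ⁅x, g ^ m⁆ := by
      rw [comm_mul_left,
        show x * ⁅y, g ^ m⁆ * x⁻¹ = ⁅y, g ^ m⁆ by rw [hcomm2.eq, mul_inv_cancel_right]]
    rw [this]
    exact mul_mem py.2 px.2
  | inv x hx px =>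
    refine ⟨inv_mem px.1, ?_⟩
    have hxz : ⁅x, g ^ m⁆ ∈ Ngrp a g := comm_mem_N a g x px.1 _ hgm
    have hcomm : Commute x ⁅x, g ^ m⁆ := N_comm a g habel _ px.1 _ hxz
    have h2 : Commute x⁻¹ ⁅x, g ^ m⁆⁻¹ := hcomm.inv_left.inv_right
    have : ⁅x⁻¹, g ^ m⁆ = ⁅x, g ^ m⁆⁻¹ := by
      rw [comm_inv_left, h2.eq, inv_mul_cancel_right]
    rw [this]
    exact inv_mem px.2

lemma lcomm_mem_N :
    ∀ (L : List G), (∀ x ∈ L, x ∈ Hgrp a g) → ∀ u ∈ Ngrp a g, lcomm u L ∈ Ngrp a g := by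
  intro L
  induction L with
  | nil => intro _ u hu; simpa [lcomm] using hu
  | cons x L ih =>
    intro hL u hu
    have : lcomm u (x :: L) = lcomm ⁅u, x⁆ L := rfl
    rw [this]
    exact ih (fun y hy => hL y (List.mem_cons_of_mem _ hy))
      _ (comm_mem_N a g u hu x (hL x List.mem_cons_self))

end Main

theorem stmt_0 {G : Type*} [Group G] (a g : G)
    (habel : ∀ u ∈ Subgroup.closure ({a, g} : Set G),
      ∀ v ∈ Subgroup.closure ({a, g} : Set G),
      Commute (u⁻¹ * a * u) (v⁻¹ * a * v))
    (t : List ℕ) (ht : t ≠ []) (htpos : ∀ i ∈ t, 0 < i)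
    (h : lcomm a (t.map (fun i => g ^ i)) = 1)
    (m : ℕ) (hm : 0 < m) (hdvd : ∀ i ∈ t, i ∣ m) :
    engel a (g ^ m) t.length = 1 := by
  have main : ∀ (l : List ℕ), (∀ i ∈ l, i ∣ m) →
      engel a (g ^ m) l.length ∈ Sg g (lcomm a (l.map (fun i => g ^ i))) := by
    intro l
    induction l using List.reverseRecOn with
    | nil => intro _; simpa [lcomm, engel] using self_mem_Sg g a
    | append_singleton l s ih =>
      intro hdl
      have hsd : s ∣ m := hdl s (by simp)
      have hld : ∀ i ∈ l, i ∣ m := fun i hi => hdl i (by simp [hi])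
      have hu : lcomm a (l.map (fun i => g ^ i)) ∈ Ngrp a g := by
        apply lcomm_mem_N a g
        · intro x hx
          simp only [List.mem_map] at hx
          obtain ⟨i, _, rfl⟩ := hx
          exact pow_mem (g_mem_H a g) i
        · exact a_mem_N a g
      have hlen : (l ++ [s]).length = l.length + 1 := by simp
      have hlc : lcomm a ((l ++ [s]).map (fun i => g ^ i))
          = ⁅lcomm a (l.map (fun i => g ^ i)), g ^ s⁆ := by
        simp [lcomm, List.map_append, List.foldl_append]
      rw [hlen, hlc]
      show ⁅engel a (g ^ m) l.length, g ^ m⁆ ∈ _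
      exact (key_step a g habel _ hu hsd _ (ih hld)).2
  have := main t hdvd
  rw [h, Sg_one_eq_bot] at this
  simpa using this
end

section
/- Let $A$ be a normal abelian subgroup of a group $G$ and $g \in G$ an element of infinite order. Suppose that for every $a \in A$ there exist a positive integer $k$ and integers $t_1, \dots, t_k \in \{1, -1\}$ such that $[a, g^{t_1}, g^{t_2}, \dots, g^{t_k}] = 1$. Then for every $a \in A$ there exists a positive integer $k$ with $[a,{}_k\, g] = 1$. -/
open scoped commutatorElement

section Aux

variable {G : Type*} [Group G]

lemma lcomm_cons (x y : G) (l : List G) : lcomm x (y :: l) = lcomm ⁅x, y⁆ l := rfl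

lemma engel_succ' (b g : G) : ∀ n, engel b g (n + 1) = engel ⁅b, g⁆ g n
  | 0 => rfl
  | n + 1 => by rw [engel, engel_succ' b g n]; rfl

lemma engel_conjinv (x g : G) : ∀ n, engel (g⁻¹ * x * g) g n = g⁻¹ * engel x g n * g
  | 0 => rfl
  | n + 1 => by
    rw [engel, engel_conjinv x g n, engel, commutatorElement_def, commutatorElement_def]
    group

lemma comm_mem (A : Subgroup G) (hA : A.Normal) {x : G} (hx : x ∈ A) (g : G) :
    ⁅x, g⁆ ∈ A := by
  have : ⁅x, g⁆ = x * (g * x⁻¹ * g⁻¹) := by rw [commutatorElement_def]; group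
  rw [this]
  exact mul_mem hx (hA.conj_mem _ (inv_mem hx) g)

lemma engel_mem (A : Subgroup G) (hA : A.Normal) (g : G) {b : G} (hb : b ∈ A) :
    ∀ n, engel b g n ∈ A
  | 0 => hb
  | n + 1 => comm_mem A hA (engel_mem A hA g hb n) g

lemma engel_inv (A : Subgroup G) (hA : A.Normal)
    (hab : ∀ u ∈ A, ∀ v ∈ A, u * v = v * u) (g : G) {c : G} (hc : c ∈ A) :
    ∀ n, engel c⁻¹ g n = (engel c g n)⁻¹
  | 0 => rfl
  | n + 1 => by
    rw [engel, engel_inv A hA hab g hc n, engel]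
    set d := engel c g n with hd
    have hdA : d ∈ A := engel_mem A hA g hc n
    have hcomm : d⁻¹ * (g * d * g⁻¹) = (g * d * g⁻¹) * d⁻¹ :=
      hab _ (inv_mem hdA) _ (hA.conj_mem _ hdA g)
    rw [commutatorElement_def, commutatorElement_def, inv_inv]
    calc d⁻¹ * g * d * g⁻¹ = d⁻¹ * (g * d * g⁻¹) := by group
      _ = (g * d * g⁻¹) * d⁻¹ := hcomm
      _ = (d * g * d⁻¹ * g⁻¹)⁻¹ := by group

lemma comm_g_inv (b g : G) : ⁅b, g⁻¹⁆ = g⁻¹ * ⁅b, g⁆⁻¹ * g := by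
  rw [commutatorElement_def, commutatorElement_def]; group

lemma key (A : Subgroup G) (hA : A.Normal)
    (hab : ∀ u ∈ A, ∀ v ∈ A, u * v = v * u) (g : G) :
    ∀ (l : List ℤ), (∀ i ∈ l, i = 1 ∨ i = -1) → ∀ b ∈ A,
      lcomm b (l.map (fun i => g ^ i)) = 1 → engel b g l.length = 1
  | [], _, b, _, hl => hl
  | i :: l, hpm, b, hb, hl => by
    have hcA : ⁅b, g⁆ ∈ A := comm_mem A hA hb g
    have hpm' : ∀ j ∈ l, j = 1 ∨ j = -1 := fun j hj => hpm j (List.mem_cons_of_mem _ hj)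
    rw [List.map_cons, lcomm_cons] at hl
    rcases hpm i List.mem_cons_self with hi | hi
    · subst hi
      rw [zpow_one] at hl
      have := key A hA hab g l hpm' ⁅b, g⁆ hcA hl
      rw [List.length_cons, engel_succ']
      exact this
    · subst hi
      rw [zpow_neg_one, comm_g_inv] at hl
      have hmem : g⁻¹ * ⁅b, g⁆⁻¹ * g ∈ A := by
        have : g⁻¹ * ⁅b, g⁆⁻¹ * g = g⁻¹ * ⁅b, g⁆⁻¹ * g⁻¹⁻¹ := by group
        rw [this]
        exact hA.conj_mem _ (inv_mem hcA) g⁻¹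
      have h1 := key A hA hab g l hpm' _ hmem hl
      rw [engel_conjinv, engel_inv A hA hab g hcA] at h1
      have h2 : (engel ⁅b, g⁆ g l.length)⁻¹ = 1 := by
        have := congrArg (fun x => g * x * g⁻¹) h1
        simpa [mul_assoc] using this
      rw [List.length_cons, engel_succ']
      exact inv_eq_one.mp h2

end Aux

theorem stmt_3 {G : Type*} [Group G] (A : Subgroup G) (hA : A.Normal)
    (hab : ∀ u ∈ A, ∀ v ∈ A, u * v = v * u)
    (g : G) (hg : ¬ IsOfFinOrder g)
    (h : ∀ a ∈ A, ∃ t : List ℤ, t ≠ [] ∧ (∀ i ∈ t, i = 1 ∨ i = -1) ∧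
      lcomm a (t.map (fun i => g ^ i)) = 1) :
    ∀ a ∈ A, ∃ k : ℕ, 0 < k ∧ engel a g k = 1 := by
  intro a ha
  obtain ⟨t, htne, htpm, htl⟩ := h a ha
  exact ⟨t.length, List.length_pos_iff.mpr htne, key A hA hab g t htpm a ha htl⟩
end

section
/- Let $G$ be a group with a normal abelian subgroup $A$, let $g \in G$, and let $a_1, a_2 \in A$, $n \in \mathbb{Z}$. Then for every positive integer $k$, $[a_1 g^n, {}_k\, a_2 g^n] = 1$ if and only if $[a_1 a_2^{-1}, {}_k\, g^n] = 1$. -/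
open scoped commutatorElement

lemma engel_mem_s7 {G : Type*} [Group G] (A : Subgroup G) (hA : A.Normal)
    (x h : G) (hx : x ∈ A) : ∀ k, engel x h k ∈ A := by
  intro k
  induction k with
  | zero => exact hx
  | succ k ih =>
    show ⁅engel x h k, h⁆ ∈ A
    have : ⁅engel x h k, h⁆ = engel x h k * (h * (engel x h k)⁻¹ * h⁻¹) := by
      rw [commutatorElement_def]; group
    rw [this]
    exact mul_mem ih (hA.conj_mem _ (inv_mem ih) h)

lemma comm_eq {G : Type*} [Group G] (A : Subgroup G) (hA : A.Normal)
    (hab : ∀ u ∈ A, ∀ v ∈ A, u * v = v * u)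
    (x a h : G) (hx : x ∈ A) (ha : a ∈ A) : ⁅x, a * h⁆ = ⁅x, h⁆ := by
  have hc : a * (h * x⁻¹ * h⁻¹) = (h * x⁻¹ * h⁻¹) * a :=
    hab a ha _ (hA.conj_mem _ (inv_mem hx) h)
  have h1 : ⁅x, a * h⁆ = x * (a * (h * x⁻¹ * h⁻¹) * a⁻¹) := by
    rw [commutatorElement_def]; group
  rw [h1, hc, commutatorElement_def]; group

lemma engel_shift {G : Type*} [Group G] (A : Subgroup G) (hA : A.Normal)
    (hab : ∀ u ∈ A, ∀ v ∈ A, u * v = v * u)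
    (h a₁ a₂ : G) (ha₁ : a₁ ∈ A) (ha₂ : a₂ ∈ A) :
    ∀ k, engel (a₁ * h) (a₂ * h) (k + 1) = engel (a₁ * a₂⁻¹) h (k + 1) := by
  intro k
  induction k with
  | zero =>
    show ⁅a₁ * h, a₂ * h⁆ = ⁅a₁ * a₂⁻¹, h⁆
    have hb : h * (a₂ * a₁⁻¹) * h⁻¹ ∈ A := hA.conj_mem _ (mul_mem ha₂ (inv_mem ha₁)) h
    have hc : (h * (a₂ * a₁⁻¹) * h⁻¹) * a₂⁻¹ = a₂⁻¹ * (h * (a₂ * a₁⁻¹) * h⁻¹) :=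
      hab _ hb _ (inv_mem ha₂)
    have h1 : ⁅a₁ * h, a₂ * h⁆ = a₁ * ((h * (a₂ * a₁⁻¹) * h⁻¹) * a₂⁻¹) := by
      rw [commutatorElement_def]; group
    rw [h1, hc, commutatorElement_def]; group
  | succ k ih =>
    show ⁅engel (a₁ * h) (a₂ * h) (k + 1), a₂ * h⁆ = ⁅engel (a₁ * a₂⁻¹) h (k + 1), h⁆
    rw [ih]
    exact comm_eq A hA hab _ a₂ h
      (engel_mem_s7 A hA _ h (mul_mem ha₁ (inv_mem ha₂)) (k + 1)) ha₂

theorem stmt_7 {G : Type*} [Group G] (A : Subgroup G) (hA : A.Normal)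
    (hab : ∀ u ∈ A, ∀ v ∈ A, u * v = v * u)
    (g : G) (a₁ a₂ : G) (ha₁ : a₁ ∈ A) (ha₂ : a₂ ∈ A) (n : ℤ) (k : ℕ) (hk : 0 < k) :
    engel (a₁ * g ^ n) (a₂ * g ^ n) k = 1 ↔ engel (a₁ * a₂⁻¹) (g ^ n) k = 1 := by
  obtain ⟨m, rfl⟩ : ∃ m, k = m + 1 := ⟨k - 1, (Nat.succ_pred_eq_of_pos hk).symm⟩
  rw [engel_shift A hA hab (g ^ n) a₁ a₂ ha₁ ha₂ m]
end

section
/- Let $G$ be a finite $p$-soluble group, $x \in G$ a $p$-element, and $P$ a Sylow $p$-subgroup of $G$. Suppose that for every $y \in G$ with $x^y \in P$, there exists a positive integer $k$ such that $[x^y,{}_k\, x] = 1$ or $[x,{}_k\, x^y] = 1$. Then $x \in P$. -/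
open scoped commutatorElement

/-- A group is `p`-soluble if it has a subnormal series each of whose factors is a
`p`-group or a `p'`-group. -/
def IsPSolvable (p : ℕ) (G : Type*) [Group G] : Prop :=
  ∃ n : ℕ, ∃ s : Fin (n + 1) → Subgroup G,
    s 0 = ⊥ ∧ s (Fin.last n) = ⊤ ∧
    ∀ i : Fin n, s i.castSucc ≤ s i.succ ∧
      ((s i.castSucc).subgroupOf (s i.succ)).Normal ∧
      ((∃ m : ℕ, (s i.castSucc).relIndex (s i.succ) = p ^ m) ∨
        ((s i.castSucc).relIndex (s i.succ)).Coprime p)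

namespace StmtAux
variable {G : Type*} [Group G]

lemma engel_map {H : Type*} [Group H] (f : G →* H) (x y : G) (k : ℕ) :
    f (engel x y k) = engel (f x) (f y) k := by
  induction k with
  | zero => rfl
  | succ k ih => show f ⁅engel x y k, y⁆ = ⁅engel (f x) (f y) k, f y⁆
                 rw [map_commutatorElement, ih]

/-- Key elementary lemma: if `f = v * (a * v⁻¹ * a⁻¹)` commutes with `a` and has order
coprime to that of `a`, then `f = 1`. -/
lemma lemmaC (a f v : G) (hf : f = v * (a * v⁻¹ * a⁻¹)) (hc : Commute f a)
    (hcop : (orderOf f).Coprime (orderOf a)) :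
    f = 1 := by
  have key : ∀ i : ℕ, a ^ i * v⁻¹ * (a ^ i)⁻¹ = v⁻¹ * f ^ i := by
    intro i
    induction i with
    | zero => simp
    | succ i ih =>
      have hinv : v⁻¹ * f = a * v⁻¹ * a⁻¹ := by
        rw [hf]; group
      have hcomm : a * f ^ i * a⁻¹ = f ^ i := by
        have h := (hc.symm.pow_right i).eq
        rw [h]; group
      calc a ^ (i+1) * v⁻¹ * (a ^ (i+1))⁻¹
          = a * (a ^ i * v⁻¹ * (a ^ i)⁻¹) * a⁻¹ := by
            rw [pow_succ' a i]; group
        _ = a * (v⁻¹ * f ^ i) * a⁻¹ := by rw [ih]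
        _ = (a * v⁻¹ * a⁻¹) * (a * f ^ i * a⁻¹) := by group
        _ = (v⁻¹ * f) * f ^ i := by rw [hinv, hcomm]
        _ = v⁻¹ * f ^ (i+1) := by rw [pow_succ]; group
  have h1 : f ^ orderOf a = 1 := by
    have := key (orderOf a)
    rw [pow_orderOf_eq_one a] at this
    simpa using this.symm
  have h2 : orderOf f ∣ orderOf a := orderOf_dvd_of_pow_eq_one h1
  have : orderOf f = 1 := Nat.Coprime.eq_one_of_dvd hcop h2
  exact orderOf_eq_one_iff.mp this

end StmtAux

namespace StmtAux
variable {G : Type*} [Group G]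

lemma orderOf_dvd_card_of_mem {N : Subgroup G} {z : G} (hz : z ∈ N) :
    orderOf z ∣ Nat.card N := by
  have h2 := orderOf_injective N.subtype N.subtype_injective ⟨z, hz⟩
  have h1 : orderOf (⟨z, hz⟩ : N) ∣ Nat.card N := orderOf_dvd_natCard _
  simpa [h2] using h1

lemma engel_mem {N : Subgroup G} (hN : N.Normal) (a c : G) (hc : c ∈ N) :
    ∀ k, engel c a k ∈ N := by
  intro k
  induction k with
  | zero => exact hc
  | succ k ih =>
    have hform : engel c a (k+1) = (engel c a k) * (a * (engel c a k)⁻¹ * a⁻¹) := by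
      show ⁅engel c a k, a⁆ = _
      rw [commutatorElement_def]; group
    rw [hform]
    exact mul_mem ih (hN.conj_mem _ (inv_mem ih) a)

lemma subA {p : ℕ} {N : Subgroup G} (hN : N.Normal)
    (hNcard : (Nat.card N).Coprime p) (a c : G)
    (ha : ∃ s : ℕ, orderOf a = p ^ s) (hc : c ∈ N) :
    ∀ k : ℕ, engel c a k = 1 → Commute c a := by
  intro k
  induction k with
  | zero => intro h0; rw [show c = 1 from h0]; exact Commute.one_left a
  | succ k ih =>
    intro h1
    cases k with
    | zero => exact commutatorElement_eq_one_iff_commute.mp h1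
    | succ j =>
      have hgN : engel c a j ∈ N := engel_mem hN a c hc j
      have hfN : engel c a (j+1) ∈ N := engel_mem hN a c hc (j+1)
      have hcomm : Commute (engel c a (j+1)) a := commutatorElement_eq_one_iff_commute.mp h1
      have hform : engel c a (j+1) = (engel c a j) * (a * (engel c a j)⁻¹ * a⁻¹) := by
        show ⁅engel c a j, a⁆ = _
        rw [commutatorElement_def]; group
      obtain ⟨s, hs⟩ := ha
      have hdvd : orderOf (engel c a (j+1)) ∣ Nat.card N := orderOf_dvd_card_of_mem hfN
      have hcop : (orderOf (engel c a (j+1))).Coprime (orderOf a) := by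
        rw [hs]
        exact Nat.Coprime.pow_right s (Nat.Coprime.coprime_dvd_left hdvd hNcard)
      have hone : engel c a (j+1) = 1 := lemmaC a _ (engel c a j) hform hcomm hcop
      exact ih hone

lemma eq_of_engel_right {p : ℕ} {N : Subgroup G} (hN : N.Normal)
    (hNcard : (Nat.card N).Coprime p) (a x : G)
    (ha : ∃ s : ℕ, orderOf a = p ^ s) (hxo : ∃ s : ℕ, orderOf x = p ^ s)
    (hc : a⁻¹ * x ∈ N) (k : ℕ) (hk : engel x a k = 1) : x = a := by
  set c := a⁻¹ * x with hcdef
  have hx : x = a * c := by rw [hcdef]; group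
  have conj : ∀ j : ℕ, engel x a (j+1) = a * engel c a (j+1) * a⁻¹ := by
    intro j
    induction j with
    | zero =>
      show ⁅x, a⁆ = a * ⁅c, a⁆ * a⁻¹
      rw [commutatorElement_def, commutatorElement_def, hx]; group
    | succ j ih =>
      show ⁅engel x a (j+1), a⁆ = a * ⁅engel c a (j+1), a⁆ * a⁻¹
      rw [ih, commutatorElement_def, commutatorElement_def]; group
  cases k with
  | zero =>
    have hx1 : x = 1 := hk
    have hceq : c = a⁻¹ := by rw [hcdef, hx1, mul_one]
    have haN : a⁻¹ ∈ N := hceq ▸ hc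
    obtain ⟨s, hs⟩ := ha
    have hdvd : orderOf a ∣ Nat.card N := by
      have := orderOf_dvd_card_of_mem haN
      rwa [orderOf_inv] at this
    have hcop : (orderOf a).Coprime (orderOf a) := by
      rw [hs]
      exact Nat.Coprime.pow_right s (Nat.Coprime.coprime_dvd_left (hs ▸ hdvd) hNcard)
    have ha1 : a = 1 := orderOf_eq_one_iff.mp (Nat.Coprime.eq_one_of_dvd hcop dvd_rfl)
    rw [hx1, ha1]
  | succ j =>
    have h3 : a * engel c a (j+1) * a⁻¹ = 1 := by rw [← conj j, hk]
    have h2 : engel c a (j+1) = 1 := by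
      have h4 : engel c a (j+1) = a⁻¹ * (a * engel c a (j+1) * a⁻¹) * a := by group
      rw [h3] at h4; simpa using h4
    have hcm : Commute c a := subA hN hNcard a c ha hc (j+1) h2
    obtain ⟨s1, hs1⟩ := ha
    obtain ⟨s2, hs2⟩ := hxo
    set n := p ^ (s1 + s2) with hn
    have hap : a ^ n = 1 := by
      apply orderOf_dvd_iff_pow_eq_one.mp
      rw [hs1, hn]; exact pow_dvd_pow p (Nat.le_add_right _ _)
    have hxp : x ^ n = 1 := by
      apply orderOf_dvd_iff_pow_eq_one.mp
      rw [hs2, hn]; exact pow_dvd_pow p (Nat.le_add_left _ _)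
    have hcp : c ^ n = 1 := by
      have h4 : (a * c) ^ n = a ^ n * c ^ n := (hcm.symm).mul_pow n
      have h5 : x ^ n = c ^ n := by rw [hx, h4, hap, one_mul]
      rw [← h5, hxp]
    have hdvd1 : orderOf c ∣ n := orderOf_dvd_of_pow_eq_one hcp
    have hdvd2 : orderOf c ∣ Nat.card N := orderOf_dvd_card_of_mem hc
    have hcop : (orderOf c).Coprime n := by
      rw [hn]
      exact Nat.Coprime.pow_right _ (Nat.Coprime.coprime_dvd_left hdvd2 hNcard)
    have hc1 : c = 1 := orderOf_eq_one_iff.mp (Nat.Coprime.eq_one_of_dvd hcop hdvd1)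
    rw [hx, hc1, mul_one]

lemma eq_of_engel {p : ℕ} {N : Subgroup G} (hN : N.Normal)
    (hNcard : (Nat.card N).Coprime p) (a x : G)
    (ha : ∃ s : ℕ, orderOf a = p ^ s) (hxo : ∃ s : ℕ, orderOf x = p ^ s)
    (hc : a⁻¹ * x ∈ N) (k : ℕ)
    (hk : engel a x k = 1 ∨ engel x a k = 1) : x = a := by
  rcases hk with hk | hk
  · have hc' : x⁻¹ * a ∈ N := by
      have := inv_mem hc
      rwa [mul_inv_rev, inv_inv] at this
    exact (eq_of_engel_right hN hNcard x a hxo ha hc' k hk).symm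
  · exact eq_of_engel_right hN hNcard a x ha hxo hc k hk

end StmtAux

namespace StmtAux
open scoped Pointwise
variable {G : Type*} [Group G]

/-! ### Generic "core" (radical) machinery -/

def radSet (f : ℕ → Prop) (G : Type*) [Group G] : Set (Subgroup G) :=
  {N | N.Normal ∧ f (Nat.card N)}

noncomputable def rad (f : ℕ → Prop) (G : Type*) [Group G] : Subgroup G :=
  sSup (radSet f G)

lemma card_sup_dvd [Finite G] (A B : Subgroup G) (hB : B.Normal) :
    Nat.card ↥(A ⊔ B) ∣ Nat.card A * Nat.card B := by
  haveI := hB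
  have h1 : Nat.card ↥(A ⊔ B) =
      Nat.card (↥(A ⊔ B) ⧸ B.subgroupOf (A ⊔ B)) * Nat.card (B.subgroupOf (A ⊔ B)) :=
    Subgroup.card_eq_card_quotient_mul_card_subgroup _
  have h2 : Nat.card (B.subgroupOf (A ⊔ B)) = Nat.card B :=
    Nat.card_congr (Subgroup.subgroupOfEquivOfLe le_sup_right).toEquiv
  have h3 : Nat.card (↥(A ⊔ B) ⧸ B.subgroupOf (A ⊔ B)) = Nat.card (↥A ⧸ B.subgroupOf A) :=
    (Nat.card_congr (QuotientGroup.quotientInfEquivProdNormalQuotient A B).toEquiv).symm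
  have h4 : Nat.card (↥A ⧸ B.subgroupOf A) ∣ Nat.card A := Subgroup.card_quotient_dvd_card _
  rw [h1, h2, h3]
  exact mul_dvd_mul h4 dvd_rfl

lemma rad_mem_radSet [Finite G] {f : ℕ → Prop} (hf1 : f 1)
    (hfc : ∀ a b d : ℕ, f a → f b → d ∣ a * b → f d) :
    (rad f G).Normal ∧ f (Nat.card (rad f G)) := by
  have hfin : (radSet f G).Finite := Set.toFinite _
  have hsup : rad f G = hfin.toFinset.sup id := by
    apply le_antisymm
    · exact sSup_le fun N hN => Finset.le_sup (f := id) (by simpa using hN)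
    · exact Finset.sup_le fun N hN => le_sSup (by simpa using hfin.mem_toFinset.mp hN)
  rw [hsup]
  refine Finset.sup_induction (p := fun N : Subgroup G => N.Normal ∧ f (Nat.card N)) ⟨inferInstance, by simpa using hf1⟩ ?_ ?_
  · rintro A ⟨hA, hfA⟩ B ⟨hB, hfB⟩
    haveI := hA; haveI := hB
    exact ⟨inferInstance, hfc _ _ _ hfA hfB (card_sup_dvd A B hB)⟩
  · intro N hN
    exact hfin.mem_toFinset.mp hN

lemma rad_map_aut [Finite G] {f : ℕ → Prop} (e : G ≃* G) :
    (rad f G).map e.toMonoidHom = rad f G := by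
  have hcard : ∀ (K : Subgroup G), Nat.card (K.map e.toMonoidHom) = Nat.card K := fun K =>
    (Nat.card_congr (Subgroup.equivMapOfInjective K e.toMonoidHom e.injective).toEquiv).symm
  have himg : Subgroup.map e.toMonoidHom '' (radSet f G) = radSet f G := by
    ext N
    constructor
    · rintro ⟨K, ⟨hK, hfK⟩, rfl⟩
      refine ⟨hK.map _ e.surjective, ?_⟩
      rw [hcard K]; exact hfK
    · intro hN
      refine ⟨N.map e.symm.toMonoidHom, ⟨hN.1.map _ e.symm.surjective, ?_⟩, ?_⟩
      · have : Nat.card (N.map e.symm.toMonoidHom) = Nat.card N :=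
          (Nat.card_congr (Subgroup.equivMapOfInjective N e.symm.toMonoidHom
            e.symm.injective).toEquiv).symm
        rw [this]; exact hN.2
      · rw [Subgroup.map_map]
        have : e.toMonoidHom.comp e.symm.toMonoidHom = MonoidHom.id G := by
          ext g; simp
        rw [this, Subgroup.map_id]
  calc (rad f G).map e.toMonoidHom
      = sSup (Subgroup.map e.toMonoidHom '' radSet f G) := by
        rw [rad, (Subgroup.gc_map_comap e.toMonoidHom).l_sSup, sSup_image]
    _ = rad f G := by rw [himg, rad]

lemma radLift [Finite G] (f : ℕ → Prop) (hf1 : f 1)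
    (hfc : ∀ a b d : ℕ, f a → f b → d ∣ a * b → f d)
    {M : Subgroup G} (hM : M.Normal) {N₀ : Subgroup ↥M} (h₀ : N₀.Normal)
    (hbot : N₀ ≠ ⊥) (hcard : f (Nat.card N₀)) :
    ∃ N : Subgroup G, N.Normal ∧ N ≠ ⊥ ∧ f (Nat.card N) := by
  haveI := hM
  obtain ⟨hrnorm, hrcard⟩ := rad_mem_radSet (G := ↥M) hf1 hfc
  have hle : N₀ ≤ rad f ↥M := le_sSup ⟨h₀, hcard⟩
  have hrbot : rad f ↥M ≠ ⊥ := fun hbot' => hbot (le_bot_iff.mp (hbot' ▸ hle))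
  refine ⟨(rad f ↥M).map M.subtype, ?_, ?_, ?_⟩
  · constructor
    intro n hn g
    obtain ⟨m, hm, rfl⟩ := hn
    have key : (MulAut.conjNormal g : MulAut ↥M) m ∈ rad f ↥M := by
      have h := rad_map_aut (G := ↥M) (f := f) (MulAut.conjNormal g)
      rw [← h]
      exact ⟨m, hm, rfl⟩
    refine ⟨_, key, ?_⟩
    simp [MulAut.conjNormal_apply]
  · rw [Ne, Subgroup.map_eq_bot_iff]
    intro hle'
    apply hrbot
    have : M.subtype.ker = ⊥ := M.ker_subtype
    rw [this] at hle'
    exact le_bot_iff.mp hle'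
  · have : Nat.card ((rad f ↥M).map M.subtype) = Nat.card (rad f ↥M) :=
      (Nat.card_congr (Subgroup.equivMapOfInjective _ M.subtype M.subtype_injective).toEquiv).symm
    rw [this]; exact hrcard

end StmtAux

namespace StmtAux
variable {G : Type*} [Group G]

lemma relfactor_transfer {p d e : ℕ} (hp : p.Prime) (hdvd : d ∣ e)
    (he : (∃ m, e = p ^ m) ∨ e.Coprime p) : (∃ m, d = p ^ m) ∨ d.Coprime p := by
  rcases he with ⟨m, rfl⟩ | hcop
  · obtain ⟨k, _, hke⟩ := (Nat.dvd_prime_pow hp).mp hdvd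
    exact Or.inl ⟨k, hke⟩
  · exact Or.inr (Nat.Coprime.coprime_dvd_left hdvd hcop)

lemma normal_subgroupOf_subgroupOf {A B : Subgroup G} (H : Subgroup G) (hAB : A ≤ B)
    (hnorm : (A.subgroupOf B).Normal) :
    ((A.subgroupOf H).subgroupOf (B.subgroupOf H)).Normal := by
  constructor
  intro u hu g
  rw [Subgroup.mem_subgroupOf, Subgroup.mem_subgroupOf] at hu
  have huB : ((u : ↥H) : G) ∈ B := Subgroup.mem_subgroupOf.mp u.2
  have hgB : ((g : ↥H) : G) ∈ B := Subgroup.mem_subgroupOf.mp g.2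
  have key := hnorm.conj_mem ⟨((u : ↥H) : G), huB⟩ (Subgroup.mem_subgroupOf.mpr hu) ⟨_, hgB⟩
  rw [Subgroup.mem_subgroupOf] at key
  rw [Subgroup.mem_subgroupOf, Subgroup.mem_subgroupOf]
  simpa using key

lemma relindex_subgroupOf_dvd {A B : Subgroup G} (H : Subgroup G) (hAB : A ≤ B)
    (hnorm : (A.subgroupOf B).Normal) :
    (A.subgroupOf H).relIndex (B.subgroupOf H) ∣ A.relIndex B := by
  haveI := hnorm
  have hmul : ∀ (a b : ↥(B.subgroupOf H)),
      (⟨((a*b : ↥(B.subgroupOf H)) : ↥H), Subgroup.mem_subgroupOf.mp (a*b).2⟩ : ↥B) =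
      ⟨_, Subgroup.mem_subgroupOf.mp a.2⟩ * ⟨_, Subgroup.mem_subgroupOf.mp b.2⟩ := by
    intro a b; ext; simp
  let φ : ↥(B.subgroupOf H) →* ↥B ⧸ A.subgroupOf B :=
    MonoidHom.mk' (fun b => QuotientGroup.mk ⟨_, Subgroup.mem_subgroupOf.mp b.2⟩)
      (by intro a b; rw [hmul a b]; rfl)
  have hker : (A.subgroupOf H).subgroupOf (B.subgroupOf H) = φ.ker := by
    ext b
    rw [Subgroup.mem_subgroupOf, Subgroup.mem_subgroupOf, MonoidHom.mem_ker]
    show _ ↔ QuotientGroup.mk _ = 1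
    rw [QuotientGroup.eq_one_iff, Subgroup.mem_subgroupOf]
  have c1 : (A.subgroupOf H).relIndex (B.subgroupOf H) =
      Nat.card (↥(B.subgroupOf H) ⧸ φ.ker) := by
    rw [Subgroup.relIndex, Subgroup.index_eq_card, hker]
  have c2 : Nat.card (↥(B.subgroupOf H) ⧸ φ.ker) = Nat.card φ.range :=
    Nat.card_congr (QuotientGroup.quotientKerEquivRange φ).toEquiv
  have c3 : Nat.card φ.range ∣ Nat.card (↥B ⧸ A.subgroupOf B) :=
    Subgroup.card_subgroup_dvd_card _
  have c4 : A.relIndex B = Nat.card (↥B ⧸ A.subgroupOf B) := by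
    rw [Subgroup.relIndex, Subgroup.index_eq_card]
  rw [c1, c2, c4]
  exact c3

lemma isPSolvable_subgroup {p : ℕ} (hp : p.Prime) (hG : IsPSolvable p G) (H : Subgroup G) :
    IsPSolvable p ↥H := by
  obtain ⟨n, s, h0, hl, hstep⟩ := hG
  refine ⟨n, fun i => (s i).subgroupOf H,
    by show (s 0).subgroupOf H = ⊥; rw [h0, Subgroup.bot_subgroupOf],
    by show (s (Fin.last n)).subgroupOf H = ⊤; rw [hl, Subgroup.top_subgroupOf], fun i => ?_⟩
  obtain ⟨hle, hnorm, hrel⟩ := hstep i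
  refine ⟨fun x hx => Subgroup.mem_subgroupOf.mpr (hle (Subgroup.mem_subgroupOf.mp hx)),
    normal_subgroupOf_subgroupOf H hle hnorm,
    relfactor_transfer hp (relindex_subgroupOf_dvd H hle hnorm) hrel⟩

end StmtAux

namespace StmtAux
universe u
variable {G : Type*} [Group G]

lemma normal_subgroupOf_map {A B N : Subgroup G} [N.Normal] (hAB : A ≤ B)
    (hnorm : (A.subgroupOf B).Normal) :
    ((A.map (QuotientGroup.mk' N)).subgroupOf (B.map (QuotientGroup.mk' N))).Normal := by
  constructor
  intro u hu g
  rw [Subgroup.mem_subgroupOf] at hu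
  obtain ⟨a, haA, ha⟩ := hu
  obtain ⟨b, hbB, hb⟩ := g.2
  have key := hnorm.conj_mem ⟨a, hAB haA⟩ (Subgroup.mem_subgroupOf.mpr haA) ⟨b, hbB⟩
  rw [Subgroup.mem_subgroupOf] at key
  rw [Subgroup.mem_subgroupOf]
  refine ⟨b * a * b⁻¹, by simpa using key, ?_⟩
  rw [map_mul, map_mul, map_inv, ha, hb]
  push_cast
  rfl

lemma relindex_map_dvd {A B N : Subgroup G} [N.Normal] (hAB : A ≤ B)
    (hnorm : (A.subgroupOf B).Normal) :
    (A.map (QuotientGroup.mk' N)).relIndex (B.map (QuotientGroup.mk' N)) ∣ A.relIndex B := by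
  haveI := hnorm
  haveI := normal_subgroupOf_map (N := N) hAB hnorm
  set π := QuotientGroup.mk' N with hπ
  have hmul : ∀ (a b : ↥B), (⟨π ↑(a*b), Subgroup.mem_map_of_mem π (a*b).2⟩ : ↥(B.map π)) =
      ⟨π ↑a, Subgroup.mem_map_of_mem π a.2⟩ * ⟨π ↑b, Subgroup.mem_map_of_mem π b.2⟩ := by
    intro a b; ext; push_cast; rw [map_mul]
  let ψ : ↥B →* ↥(B.map π) ⧸ (A.map π).subgroupOf (B.map π) :=
    MonoidHom.mk' (fun b : ↥B => QuotientGroup.mk ⟨π ↑b, Subgroup.mem_map_of_mem π b.2⟩)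
      (by intro a b; rw [hmul a b]; rfl)
  have hker : ∀ x ∈ A.subgroupOf B, ψ x = 1 := by
    intro x hx
    show QuotientGroup.mk _ = 1
    rw [QuotientGroup.eq_one_iff, Subgroup.mem_subgroupOf]
    exact Subgroup.mem_map_of_mem π (Subgroup.mem_subgroupOf.mp hx)
  let ψ' := QuotientGroup.lift (A.subgroupOf B) ψ hker
  have hsurj : Function.Surjective ψ' := by
    intro t
    induction t using QuotientGroup.induction_on with
    | _ u =>
      obtain ⟨b, hbB, hb⟩ := u.2
      refine ⟨QuotientGroup.mk ⟨b, hbB⟩, ?_⟩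
      show ψ ⟨b, hbB⟩ = QuotientGroup.mk u
      show QuotientGroup.mk _ = QuotientGroup.mk u
      congr 1
      exact Subtype.ext hb
  have c1 : (A.map π).relIndex (B.map π) =
      Nat.card (↥(B.map π) ⧸ (A.map π).subgroupOf (B.map π)) := by
    rw [Subgroup.relIndex, Subgroup.index_eq_card]
  have c4 : A.relIndex B = Nat.card (↥B ⧸ A.subgroupOf B) := by
    rw [Subgroup.relIndex, Subgroup.index_eq_card]
  rw [c1, c4]
  exact Subgroup.card_dvd_of_surjective ψ' hsurj

lemma isPSolvable_quotient {p : ℕ} (hp : p.Prime) (hG : IsPSolvable p G)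
    (N : Subgroup G) [N.Normal] : IsPSolvable p (G ⧸ N) := by
  obtain ⟨n, s, h0, hl, hstep⟩ := hG
  refine ⟨n, fun i => (s i).map (QuotientGroup.mk' N),
    by show (s 0).map _ = ⊥; rw [h0]; exact Subgroup.map_bot _,
    by show (s (Fin.last n)).map _ = ⊤; rw [hl];
       exact Subgroup.map_top_of_surjective _ (QuotientGroup.mk'_surjective N),
    fun i => ?_⟩
  obtain ⟨hle, hnorm, hrel⟩ := hstep i
  exact ⟨Subgroup.map_mono hle, normal_subgroupOf_map hle hnorm,
    relfactor_transfer hp (relindex_map_dvd hle hnorm) hrel⟩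

lemma H1aux [Finite G] {p : ℕ} :
    ∀ (n : ℕ) (s : Fin (n + 1) → Subgroup G), s 0 = ⊥ → s (Fin.last n) = ⊤ →
    (∀ i : Fin n, s i.castSucc ≤ s i.succ ∧ ((s i.castSucc).subgroupOf (s i.succ)).Normal ∧
      ((∃ m : ℕ, (s i.castSucc).relIndex (s i.succ) = p ^ m) ∨
        ((s i.castSucc).relIndex (s i.succ)).Coprime p)) →
    (⊤ : Subgroup G) ≠ ⊥ →
    ∃ M : Subgroup G, M.Normal ∧ M ≠ ⊤ ∧
      ((∃ m : ℕ, M.index = p ^ m) ∨ M.index.Coprime p) := by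
  intro n
  induction n with
  | zero =>
    intro s h0 hl _ hne
    exact absurd (by rw [← hl, show Fin.last 0 = 0 from rfl, h0]) hne
  | succ n ih =>
    intro s h0 hl hstep hne
    by_cases hM : s (Fin.last n).castSucc = ⊤
    · refine ih (fun j => s j.castSucc)
        (by show s (0 : Fin (n+1)).castSucc = ⊥; rw [Fin.castSucc_zero, h0])
        (by show s (Fin.last n).castSucc = ⊤; exact hM) ?_ hne
      intro i
      have h := hstep i.castSucc
      rw [Fin.succ_castSucc] at h
      exact h
    · have hstep' := hstep (Fin.last n)
      rw [Fin.succ_last, hl] at hstep'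
      obtain ⟨-, hnorm, hrel⟩ := hstep'
      refine ⟨s (Fin.last n).castSucc, ?_, hM, ?_⟩
      · constructor
        intro m hm g
        have key := hnorm.conj_mem ⟨m, Subgroup.mem_top m⟩
          (Subgroup.mem_subgroupOf.mpr hm) ⟨g, Subgroup.mem_top g⟩
        rw [Subgroup.mem_subgroupOf] at key
        simpa using key
      · rwa [Subgroup.relIndex_top_right] at hrel

lemma lemL {p : ℕ} (hp : p.Prime) :
    ∀ (c : ℕ) (G : Type u) [Group G] [Finite G], Nat.card G = c → IsPSolvable p G →
    Nat.card G ≠ 1 →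
    ∃ N : Subgroup G, N.Normal ∧ N ≠ ⊥ ∧
      ((∃ m : ℕ, Nat.card N = p ^ m) ∨ (Nat.card N).Coprime p) := by
  intro c
  induction c using Nat.strong_induction_on with
  | _ c ih =>
    intro G _ _ hc hG hne
    have htop : (⊤ : Subgroup G) ≠ ⊥ := by
      intro htop'
      apply hne
      rw [← Subgroup.card_top (G := G), htop', Subgroup.card_bot]
    obtain ⟨n, s, h0, hl, hstep⟩ := hG
    obtain ⟨M, hMnorm, hMne, hMidx⟩ := H1aux n s h0 hl hstep htop
    by_cases hMbot : M = ⊥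
    · refine ⟨⊤, inferInstance, htop, ?_⟩
      have hidx : M.index = Nat.card G := by rw [hMbot, Subgroup.index_bot]
      rw [Subgroup.card_top]
      rw [hidx] at hMidx
      exact hMidx
    · have hcM : Nat.card ↥M < c := by
        have h1 : Nat.card ↥M ∣ Nat.card G := Subgroup.card_subgroup_dvd_card M
        have h2 : Nat.card ↥M ≠ Nat.card G := fun hcontra => hMne (Subgroup.eq_top_of_card_eq M hcontra)
        have h3 : 0 < Nat.card G := Nat.card_pos
        rw [← hc]
        exact lt_of_le_of_ne (Nat.le_of_dvd h3 h1) h2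
      have hMps : IsPSolvable p ↥M := isPSolvable_subgroup hp ⟨n, s, h0, hl, hstep⟩ M
      have hMne1 : Nat.card ↥M ≠ 1 := fun hcontra => hMbot (Subgroup.card_eq_one.mp hcontra)
      obtain ⟨N₀, h₀, h₀ne, h₀card⟩ := ih _ hcM ↥M rfl hMps hMne1
      rcases h₀card with hPcase | hCcase
      · obtain ⟨Nn, ha, hb, hcC⟩ := radLift (fun d => ∃ m, d = p ^ m) ⟨0, by norm_num⟩
          (by
            rintro a b d ⟨ma, rfl⟩ ⟨mb, rfl⟩ hd
            rw [← pow_add] at hd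
            obtain ⟨k, _, hk⟩ := (Nat.dvd_prime_pow hp).mp hd
            exact ⟨k, hk⟩) hMnorm h₀ h₀ne hPcase
        exact ⟨Nn, ha, hb, Or.inl hcC⟩
      · obtain ⟨Nn, ha, hb, hcC⟩ := radLift (fun d => d.Coprime p) (Nat.coprime_one_left p)
          (by
            intro a b d hfa hfb hd
            exact Nat.Coprime.coprime_dvd_left hd (Nat.Coprime.mul hfa hfb)) hMnorm h₀ h₀ne hCcase
        exact ⟨Nn, ha, hb, Or.inr hcC⟩

end StmtAux

namespace StmtAux
open scoped Pointwise
variable {G : Type*} [Group G]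

lemma orderOf_conj_eq (x y : G) : orderOf (y⁻¹ * x * y) = orderOf x := by
  have h : y⁻¹ * x * y = (MulAut.conj y⁻¹) x := by
    simp [MulAut.conj_apply]
  rw [h]
  exact orderOf_injective (MulAut.conj y⁻¹).toMonoidHom (MulAut.conj y⁻¹).injective x

lemma normal_pgroup_le_sylow [Finite G] {p : ℕ} [Fact p.Prime] (P : Sylow p G)
    {N : Subgroup G} (hN : N.Normal) (hpg : IsPGroup p N) : N ≤ P := by
  obtain ⟨Q, hQ⟩ := hpg.exists_le_sylow
  obtain ⟨g, hg⟩ := MulAction.exists_smul_eq G Q P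
  intro n hn
  have h1 : g⁻¹ * n * g ∈ N := by simpa using hN.conj_mem n hn g⁻¹
  have h2 : g⁻¹ * n * g ∈ Q := hQ h1
  have h3 : n ∈ ((g • Q : Sylow p G) : Subgroup G) := by
    rw [Sylow.coe_subgroup_smul, Subgroup.mem_pointwise_smul_iff_inv_smul_mem]
    simpa using (show g⁻¹ * n * g ∈ (Q : Subgroup G) from h2)
  rw [hg] at h3
  exact h3

lemma isPGroup_zpowers {p : ℕ} {a : G} (ha : ∃ s : ℕ, orderOf a = p ^ s) :
    IsPGroup p (Subgroup.zpowers a) := by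
  obtain ⟨s, hs⟩ := ha
  intro g
  refine ⟨s, ?_⟩
  obtain ⟨j, hj⟩ := g.2
  have h1 : a ^ (p ^ s : ℕ) = 1 := by rw [← hs]; exact pow_orderOf_eq_one a
  apply Subtype.ext
  push_cast
  rw [← hj]
  calc ((a ^ j) ^ (p ^ s : ℕ) : G) = (a ^ (p ^ s : ℕ)) ^ j := by
        rw [← zpow_natCast (a ^ j), ← zpow_mul, mul_comm, zpow_mul, zpow_natCast]
    _ = 1 := by rw [h1, one_zpow]

/-- If a `p`-element lies in `P ⊔ N` with `N` normal, we can conjugate it into `P`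
by an element of `N`. -/
lemma exists_conj_mem_of_mem_sup [Finite G] {p : ℕ} [Fact p.Prime] (P : Sylow p G)
    (N : Subgroup G) (hN : N.Normal) {a : G} (ha : ∃ s : ℕ, orderOf a = p ^ s)
    (haM : a ∈ (P : Subgroup G) ⊔ N) : ∃ m ∈ N, m⁻¹ * a * m ∈ (P : Subgroup G) := by
  haveI := hN
  set M : Subgroup G := (P : Subgroup G) ⊔ N with hMdef
  let PM : Sylow p ↥M := P.subtype le_sup_left
  set aM : ↥M := ⟨a, haM⟩ with haMdef
  have hz : IsPGroup p (Subgroup.zpowers aM) := by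
    apply isPGroup_zpowers
    obtain ⟨s, hs⟩ := ha
    refine ⟨s, ?_⟩
    rw [← hs]
    exact (orderOf_injective M.subtype M.subtype_injective aM).symm
  obtain ⟨R, hR⟩ := hz.exists_le_sylow
  obtain ⟨zM, hzM⟩ := MulAction.exists_smul_eq ↥M R PM
  have haR : aM ∈ R := hR (Subgroup.mem_zpowers aM)
  have h3 : aM ∈ ((zM⁻¹ • PM : Sylow p ↥M) : Subgroup ↥M) := by
    rw [← hzM]
    simpa using (show aM ∈ (R : Subgroup ↥M) from haR)
  have h4 : zM * aM * zM⁻¹ ∈ ((PM : Sylow p ↥M) : Subgroup ↥M) := by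
    rw [Sylow.coe_subgroup_smul, Subgroup.mem_pointwise_smul_iff_inv_smul_mem] at h3
    simpa using h3
  have h5 : ((zM : G) * a * (zM : G)⁻¹) ∈ (P : Subgroup G) := by
    have := (Subgroup.mem_subgroupOf (H := (P : Subgroup G)) (K := M)).mp
      (by rw [← Sylow.coe_subtype P le_sup_left]; exact h4)
    simpa using this
  -- decompose zM⁻¹ as ν * w with ν ∈ N, w ∈ P
  have hmem : ((zM⁻¹ : ↥M) : G) ∈ N ⊔ (P : Subgroup G) := by
    rw [sup_comm]
    exact (zM⁻¹ : ↥M).2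
  rw [← SetLike.mem_coe, Subgroup.normal_mul] at hmem
  obtain ⟨ν, hν, w, hw, hνw⟩ := hmem
  have hνw' : ν * w = ((zM : G))⁻¹ := by
    have hcoe : ((zM⁻¹ : ↥M) : G) = ((zM : G))⁻¹ := rfl
    rw [← hcoe]; simpa using hνw
  refine ⟨ν, hν, ?_⟩
  have hz' : (zM : G) = w⁻¹ * ν⁻¹ := by
    rw [← mul_inv_rev, hνw', inv_inv]
  have : ν⁻¹ * a * ν = w * ((zM : G) * a * (zM : G)⁻¹) * w⁻¹ := by
    rw [hz']; group
  rw [this]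
  exact Subgroup.mul_mem _ (Subgroup.mul_mem _ hw h5) (Subgroup.inv_mem _ hw)

/-- The endgame: `G = P ⊔ N` with `N` normal of coprime order. -/
lemma endgame [Finite G] {p : ℕ} [Fact p.Prime] (P : Sylow p G) (N : Subgroup G)
    (hN : N.Normal) (hNcard : (Nat.card N).Coprime p) (x : G)
    (hx : ∃ m : ℕ, orderOf x = p ^ m)
    (hsup : (P : Subgroup G) ⊔ N = ⊤)
    (h : ∀ y : G, y⁻¹ * x * y ∈ (P : Subgroup G) →
      ∃ k : ℕ, 0 < k ∧ (engel (y⁻¹ * x * y) x k = 1 ∨ engel x (y⁻¹ * x * y) k = 1)) :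
    x ∈ (P : Subgroup G) := by
  obtain ⟨m, hmN, hconj⟩ := exists_conj_mem_of_mem_sup P N hN hx
    (by rw [hsup]; exact Subgroup.mem_top x)
  obtain ⟨k, hk, hor⟩ := h m hconj
  set a := m⁻¹ * x * m with hadef
  have ha : ∃ s : ℕ, orderOf a = p ^ s := by
    rw [hadef, orderOf_conj_eq]; exact hx
  have hc : a⁻¹ * x ∈ N := by
    have h1 : a⁻¹ * x = m⁻¹ * (x⁻¹ * m * x) := by rw [hadef]; group
    rw [h1]
    exact Subgroup.mul_mem _ (Subgroup.inv_mem _ hmN)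
      (by simpa using hN.conj_mem m hmN x⁻¹)
  have := eq_of_engel hN hNcard a x ha hx hc k hor
  rw [this]
  exact hconj

end StmtAux

namespace StmtAux
universe u
variable {G : Type*} [Group G]

lemma exists_sylow_quotient [Finite G] {p : ℕ} [Fact p.Prime] (P : Sylow p G)
    (N : Subgroup G) [N.Normal] :
    ∃ Q : Sylow p (G ⧸ N), (Q : Subgroup (G ⧸ N)) = (P : Subgroup G).map (QuotientGroup.mk' N) := by
  set π := QuotientGroup.mk' N with hπ
  have hpg : IsPGroup p ((P : Subgroup G).map π) := P.2.map π
  obtain ⟨Q, hQ⟩ := hpg.exists_le_sylow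
  have hidx : ¬ p ∣ ((P : Subgroup G).map π).index := by
    intro hdvd
    have h1 := Subgroup.index_map (P : Subgroup G) π
    have h2 : π.range.index = 1 := by
      have hr : π.range = ⊤ := MonoidHom.range_eq_top.mpr (QuotientGroup.mk'_surjective N)
      rw [hr, Subgroup.index_top]
    have h3 : ((P : Subgroup G) ⊔ π.ker).index ∣ (P : Subgroup G).index :=
      Subgroup.index_dvd_of_le le_sup_left
    have h4 : ((P : Subgroup G).map π).index ∣ (P : Subgroup G).index := by
      rw [h1, h2, mul_one]; exact h3
    exact P.not_dvd_index (hdvd.trans h4)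
  obtain ⟨nQ, hnQ⟩ := Q.2.exists_card_eq
  have h5 : ((P : Subgroup G).map π).relIndex Q ∣ p ^ nQ := by
    rw [← hnQ, Subgroup.relIndex]
    exact Subgroup.index_dvd_card _
  obtain ⟨k, hkle, hke⟩ := (Nat.dvd_prime_pow Fact.out).mp h5
  have h6 : ((P : Subgroup G).map π).relIndex Q ∣ ((P : Subgroup G).map π).index := by
    rw [← Subgroup.relIndex_mul_index hQ]
    exact dvd_mul_right _ _
  have hk0 : k = 0 := by
    by_contra hk0
    have hpdvd : p ∣ ((P : Subgroup G).map π).relIndex Q := by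
      rw [hke]; exact dvd_pow_self p hk0
    exact hidx (hpdvd.trans h6)
  have hrel1 : ((P : Subgroup G).map π).relIndex Q = 1 := by rw [hke, hk0, pow_zero]
  exact ⟨Q, le_antisymm (Subgroup.relIndex_eq_one.mp hrel1) hQ⟩

lemma main_aux {p : ℕ} [Fact p.Prime] :
    ∀ (c : ℕ) (G : Type u) [Group G] [Finite G], Nat.card G = c → IsPSolvable p G →
    ∀ (x : G), (∃ m : ℕ, orderOf x = p ^ m) → ∀ (P : Sylow p G),
    (∀ y : G, y⁻¹ * x * y ∈ (P : Subgroup G) →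
      ∃ k : ℕ, 0 < k ∧ (engel (y⁻¹ * x * y) x k = 1 ∨ engel x (y⁻¹ * x * y) k = 1)) →
    x ∈ (P : Subgroup G) := by
  intro c
  induction c using Nat.strong_induction_on with
  | _ c ih =>
    intro G _ _ hc hG x hx P h
    by_cases hone : Nat.card G = 1
    · have hsing : Subsingleton G := (Nat.card_eq_one_iff_unique.mp hone).1
      have hx1 : x = 1 := Subsingleton.elim x 1
      rw [hx1]; exact Subgroup.one_mem _
    obtain ⟨N, hNnorm, hNbot, hNtype⟩ := lemL Fact.out (Nat.card G) G rfl hG hone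
    haveI := hNnorm
    set π := QuotientGroup.mk' N with hπdef
    have hπsurj := QuotientGroup.mk'_surjective N
    have hcard_lt : Nat.card (G ⧸ N) < c := by
      have h1 : Nat.card G = Nat.card (G ⧸ N) * Nat.card N :=
        Subgroup.card_eq_card_quotient_mul_card_subgroup N
      have hpos : 0 < Nat.card ↥N := Nat.card_pos
      have hne1 : Nat.card ↥N ≠ 1 := fun hh => hNbot (Subgroup.card_eq_one.mp hh)
      have h2 : 2 ≤ Nat.card ↥N := by omega
      have hq : 0 < Nat.card (G ⧸ N) := Nat.card_pos
      rw [← hc, h1]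
      have hmul : Nat.card (G ⧸ N) * 2 ≤ Nat.card (G ⧸ N) * Nat.card ↥N :=
        Nat.mul_le_mul_left _ h2
      omega
    have hπx : ∃ m : ℕ, orderOf (π x) = p ^ m := by
      obtain ⟨m0, hm0⟩ := hx
      have hdvd : orderOf (π x) ∣ p ^ m0 := by rw [← hm0]; exact orderOf_map_dvd π x
      obtain ⟨k, _, hk⟩ := (Nat.dvd_prime_pow Fact.out).mp hdvd
      exact ⟨k, hk⟩
    obtain ⟨Q, hQ⟩ := exists_sylow_quotient P N
    rcases hNtype with hPcase | hcop
    · -- N is a normal p-subgroup, hence N ≤ P : quotient by N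
      have hpg : IsPGroup p N := by
        obtain ⟨m0, hm0⟩ := hPcase
        exact IsPGroup.of_card hm0
      have hNP : N ≤ P := normal_pgroup_le_sylow P hNnorm hpg
      have hPN : (P : Subgroup G) ⊔ N = P := sup_eq_left.mpr hNP
      have hbar : ∀ ybar : G ⧸ N, ybar⁻¹ * (π x) * ybar ∈ (Q : Subgroup (G ⧸ N)) →
          ∃ k : ℕ, 0 < k ∧ (engel (ybar⁻¹ * (π x) * ybar) (π x) k = 1 ∨
            engel (π x) (ybar⁻¹ * (π x) * ybar) k = 1) := by
        intro ybar hmem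
        obtain ⟨y, rfl⟩ := hπsurj ybar
        have hπy : (π y)⁻¹ * π x * π y = π (y⁻¹ * x * y) := by
          rw [map_mul, map_mul, map_inv]
        rw [hπy, hQ] at hmem
        have hcm : y⁻¹ * x * y ∈ Subgroup.comap π ((P : Subgroup G).map π) :=
          Subgroup.mem_comap.mpr hmem
        rw [Subgroup.comap_map_eq, QuotientGroup.ker_mk', hPN] at hcm
        obtain ⟨k, hk, hor⟩ := h y hcm
        refine ⟨k, hk, ?_⟩
        rcases hor with h1 | h1
        · left; rw [hπy, ← engel_map, h1, map_one]
        · right; rw [hπy, ← engel_map, h1, map_one]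
      have hmain := ih _ hcard_lt (G ⧸ N) rfl (isPSolvable_quotient Fact.out hG N)
        (π x) hπx Q hbar
      rw [hQ] at hmain
      have hfin : x ∈ Subgroup.comap π ((P : Subgroup G).map π) := Subgroup.mem_comap.mpr hmain
      rwa [Subgroup.comap_map_eq, QuotientGroup.ker_mk', hPN] at hfin
    · -- N is a normal p'-subgroup
      by_cases hsup : (P : Subgroup G) ⊔ N = ⊤
      · exact endgame P N hNnorm hcop x hx hsup h
      · -- Step 1 : x ∈ P ⊔ N, via the quotient G/N
        have hbar : ∀ ybar : G ⧸ N, ybar⁻¹ * (π x) * ybar ∈ (Q : Subgroup (G ⧸ N)) →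
            ∃ k : ℕ, 0 < k ∧ (engel (ybar⁻¹ * (π x) * ybar) (π x) k = 1 ∨
              engel (π x) (ybar⁻¹ * (π x) * ybar) k = 1) := by
          intro ybar hmem
          obtain ⟨y₀, rfl⟩ := hπsurj ybar
          have hπy : (π y₀)⁻¹ * π x * π y₀ = π (y₀⁻¹ * x * y₀) := by
            rw [map_mul, map_mul, map_inv]
          rw [hπy, hQ] at hmem
          have hcm : y₀⁻¹ * x * y₀ ∈ (P : Subgroup G) ⊔ N := by
            have := Subgroup.mem_comap.mpr hmem
            rwa [Subgroup.comap_map_eq, QuotientGroup.ker_mk'] at this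
          have hconjord : ∃ s : ℕ, orderOf (y₀⁻¹ * x * y₀) = p ^ s := by
            rw [orderOf_conj_eq]; exact hx
          obtain ⟨m, hmN, hconj⟩ := exists_conj_mem_of_mem_sup P N hNnorm hconjord hcm
          have hyP : (y₀ * m)⁻¹ * x * (y₀ * m) ∈ (P : Subgroup G) := by
            have heq : (y₀ * m)⁻¹ * x * (y₀ * m) = m⁻¹ * (y₀⁻¹ * x * y₀) * m := by group
            rw [heq]; exact hconj
          obtain ⟨k, hk, hor⟩ := h (y₀ * m) hyP
          refine ⟨k, hk, ?_⟩
          have hπm : π m = 1 := (QuotientGroup.eq_one_iff m).mpr hmN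
          have hπy' : π ((y₀ * m)⁻¹ * x * (y₀ * m)) = (π y₀)⁻¹ * π x * π y₀ := by
            rw [map_mul, map_mul, map_inv, map_mul, hπm, mul_one]
          rcases hor with h1 | h1
          · left; rw [← hπy', ← engel_map, h1, map_one]
          · right; rw [← hπy', ← engel_map, h1, map_one]
        have hmain := ih _ hcard_lt (G ⧸ N) rfl (isPSolvable_quotient Fact.out hG N)
          (π x) hπx Q hbar
        rw [hQ] at hmain
        have hxM : x ∈ (P : Subgroup G) ⊔ N := by
          have := Subgroup.mem_comap.mpr hmain
          rwa [Subgroup.comap_map_eq, QuotientGroup.ker_mk'] at this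
        -- Step 2 : restrict to M = P ⊔ N
        set M : Subgroup G := (P : Subgroup G) ⊔ N with hM
        have hMlt : Nat.card ↥M < c := by
          have h1 : Nat.card ↥M ∣ Nat.card G := Subgroup.card_subgroup_dvd_card M
          have h2 : Nat.card ↥M ≠ Nat.card G := fun hcontra =>
            hsup (Subgroup.eq_top_of_card_eq M hcontra)
          rw [← hc]
          exact lt_of_le_of_ne (Nat.le_of_dvd Nat.card_pos h1) h2
        set PM : Sylow p ↥M := P.subtype le_sup_left with hPM
        set xM : ↥M := ⟨x, hxM⟩ with hxMdef
        have hxMo : ∃ m : ℕ, orderOf xM = p ^ m := by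
          obtain ⟨m0, hm0⟩ := hx
          refine ⟨m0, ?_⟩
          rw [← hm0]
          exact (orderOf_injective M.subtype M.subtype_injective xM).symm
        have hMhyp : ∀ yM : ↥M, yM⁻¹ * xM * yM ∈ (PM : Subgroup ↥M) →
            ∃ k : ℕ, 0 < k ∧ (engel (yM⁻¹ * xM * yM) xM k = 1 ∨
              engel xM (yM⁻¹ * xM * yM) k = 1) := by
          intro yM hmem
          rw [hPM, Sylow.coe_subtype] at hmem
          have hcoe : ((yM⁻¹ * xM * yM : ↥M) : G) = (yM : G)⁻¹ * x * (yM : G) := by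
            push_cast; rfl
          have hmem' : (yM : G)⁻¹ * x * (yM : G) ∈ (P : Subgroup G) := by
            rw [← hcoe]
            exact Subgroup.mem_subgroupOf.mp hmem
          obtain ⟨k, hk, hor⟩ := h (yM : G) hmem'
          refine ⟨k, hk, ?_⟩
          rcases hor with h1 | h1
          · left
            apply M.subtype_injective
            rw [engel_map M.subtype, map_one]
            show engel ((yM⁻¹ * xM * yM : ↥M) : G) ((xM : ↥M) : G) k = 1
            rw [hcoe]
            exact h1
          · right
            apply M.subtype_injective
            rw [engel_map M.subtype, map_one]
            show engel ((xM : ↥M) : G) ((yM⁻¹ * xM * yM : ↥M) : G) k = 1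
            rw [hcoe]
            exact h1
        have hfinal := ih _ hMlt ↥M rfl (isPSolvable_subgroup Fact.out hG M) xM hxMo PM hMhyp
        rw [hPM, Sylow.coe_subtype] at hfinal
        exact Subgroup.mem_subgroupOf.mp hfinal

end StmtAux


theorem stmt_8 {G : Type*} [Group G] [Finite G] (p : ℕ) [Fact p.Prime]
    (hG : IsPSolvable p G) (x : G) (hx : ∃ m : ℕ, orderOf x = p ^ m)
    (P : Sylow p G)
    (h : ∀ y : G, y⁻¹ * x * y ∈ (P : Subgroup G) →
      ∃ k : ℕ, 0 < k ∧ (engel (y⁻¹ * x * y) x k = 1 ∨ engel x (y⁻¹ * x * y) k = 1)) :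
    x ∈ (P : Subgroup G) :=
  StmtAux.main_aux (Nat.card G) G rfl hG x hx P h
end

section
/- Let $G$ be a group, $x \in G$ of finite order $q$, and $s \in G$ an element such that the element $c = [[x,s],{}_{k-1}\,x]$ lies in a normal subgroup $S$ of $G$ whose elements all have order coprime to $q$. If $[[x,s],{}_k\, x] = 1$ for some positive integer $k$, then $[[x,s],{}_{k-1}\, x] = 1$. -/
open scoped commutatorElement

private lemma comm_pow_aux {G : Type*} [Group G] (u x : G)
    (hc : Commute ⁅u, x⁆ x) : ⁅u, x⁆ ^ orderOf x = 1 := by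
  have key : ∀ n : ℕ, ⁅u, x ^ n⁆ = ⁅u, x⁆ ^ n := by
    intro n
    induction n with
    | zero => simp
    | succ n ih =>
      have h1 : ⁅u, x ^ n * x⁆ = ⁅u, x ^ n⁆ * (x ^ n * ⁅u, x⁆ * (x ^ n)⁻¹) := by
        simp only [commutatorElement_def]
        group
      rw [pow_succ, h1, ih, ← (hc.pow_right n).eq, mul_inv_cancel_right, pow_succ]
  have := key (orderOf x)
  rw [pow_orderOf_eq_one] at this
  simpa using this.symm

theorem stmt_9 {G : Type*} [Group G] (x s : G) (q : ℕ) (hq : orderOf x = q)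
    (hqpos : 0 < q)
    (S : Subgroup G) (hSn : S.Normal)
    (hS : ∀ a ∈ S, (orderOf a).Coprime q)
    (k : ℕ) (hk : 0 < k)
    (hc : engel ⁅x, s⁆ x (k - 1) ∈ S)
    (h : engel ⁅x, s⁆ x k = 1) :
    engel ⁅x, s⁆ x (k - 1) = 1 := by
  obtain ⟨m, rfl⟩ : ∃ m, k = m + 1 := ⟨k - 1, (Nat.succ_pred_eq_of_pos hk).symm⟩
  simp only [Nat.add_sub_cancel] at hc ⊢
  set c := engel ⁅x, s⁆ x m with hcdef
  have hcomm : Commute c x := commutatorElement_eq_one_iff_commute.mp h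
  have hcq : c ^ q = 1 := by
    cases m with
    | zero =>
      have hcomm' : Commute ⁅s, x⁆ x := by
        have : c = ⁅s, x⁆⁻¹ := by
          rw [hcdef]; show ⁅x, s⁆ = _; rw [commutatorElement_inv]
        simpa [this] using hcomm.inv_left
      have := comm_pow_aux s x hcomm'
      rw [hq] at this
      have hc' : c = ⁅s, x⁆⁻¹ := by
        rw [hcdef]; show ⁅x, s⁆ = _; rw [commutatorElement_inv]
      rw [hc', inv_pow, this, inv_one]
    | succ n =>
      have : c = ⁅engel ⁅x, s⁆ x n, x⁆ := rfl
      rw [this] at hcomm ⊢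
      have := comm_pow_aux (engel ⁅x, s⁆ x n) x hcomm
      rwa [hq] at this
  have hord : orderOf c ∣ q := orderOf_dvd_of_pow_eq_one hcq
  have hcop : (orderOf c).Coprime q := hS c hc
  have h1 : orderOf c ∣ 1 := hcop ▸ Nat.dvd_gcd dvd_rfl hord
  exact orderOf_eq_one_iff.mp (Nat.dvd_one.mp h1)
end

section
/- Let $G$ be a non-Engel group such that the set $L(G)$ of left Engel elements is a subgroup of $G$. If $x \in G \setminus L(G)$ is such that for every $y \in G \setminus L(G)$ with $y \neq x$, both $[x,{}_k\, y] \neq 1$ and $[y,{}_k\, x] \neq 1$ for all positive integers $k$, then $x^2 = 1$ and $C_G(x) = \langle x \rangle$. -/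
open scoped commutatorElement

lemma engel_one {G : Type*} [Group G] (a y : G) : engel a y 1 = ⁅a, y⁆ := rfl

theorem stmt_10 {G : Type*} [Group G] (H : Subgroup G)
    (hH : ∀ g : G, g ∈ H ↔ IsLeftEngel G g) (hne : H ≠ ⊤)
    (x : G) (hx : x ∉ H)
    (hadj : ∀ y : G, y ∉ H → y ≠ x →
      ∀ k : ℕ, 0 < k → engel x y k ≠ 1 ∧ engel y x k ≠ 1) :
    x ^ 2 = 1 ∧ Subgroup.centralizer {x} = Subgroup.zpowers x := by
  have hx2 : x ^ 2 = 1 := by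
    by_contra h2
    have hxi : x⁻¹ ∉ H := fun hm => hx ((Subgroup.inv_mem_iff H).mp hm)
    have hne' : x⁻¹ ≠ x := by
      intro he
      exact h2 (by rw [sq]; exact inv_eq_iff_mul_eq_one.mp he)
    have hk := (hadj x⁻¹ hxi hne' 1 one_pos).2
    apply hk
    rw [engel_one]
    exact commutatorElement_eq_one_iff_commute.mpr (Commute.inv_left (Commute.refl x))
  refine ⟨hx2, le_antisymm ?_ ?_⟩
  · intro c hc
    have hcx : x * c = c * x := Subgroup.mem_centralizer_iff.mp hc x rfl
    have hcomm : Commute c x := hcx.symm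
    have hcom1 : ⁅c, x⁆ = 1 := commutatorElement_eq_one_iff_commute.mpr hcomm
    by_cases hcH : c ∈ H
    · have hyH : c * x ∉ H := by
        intro hm
        exact hx (by simpa using H.mul_mem (H.inv_mem hcH) hm)
      by_cases hyx : c * x = x
      · have hc1 : c = 1 := by
          have : c * x = 1 * x := by rw [hyx, one_mul]
          exact mul_right_cancel this
        rw [hc1]; exact Subgroup.one_mem _
      · exfalso
        apply (hadj (c * x) hyH hyx 1 one_pos).2
        rw [engel_one]
        exact commutatorElement_eq_one_iff_commute.mpr (hcomm.mul_left (Commute.refl x))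
    · by_cases hcx' : c = x
      · rw [hcx']; exact Subgroup.mem_zpowers x
      · exfalso
        apply (hadj c hcH hcx' 1 one_pos).2
        rw [engel_one]; exact hcom1
  · rw [Subgroup.zpowers_le]
    exact Subgroup.mem_centralizer_iff.mpr fun g hg => by
      rw [Set.mem_singleton_iff] at hg; rw [hg]
end

section
/- Let $G$ be a non-Engel group such that $L(G)$ is a subgroup of $G$. Suppose $L(G)$ is a normal abelian subgroup without elements of order $2$, and there exists an element $x \in G \setminus L(G)$ with $x^2 = 1$, $G = L(G)\langle x \rangle$, $L(G) \cap \langle x \rangle = 1$, and $g^x = g^{-1}$ for all $g \in L(G)$. Then any two distinct elements $u, v \in G \setminus L(G)$ satisfy $[u,{}_k\, v] \neq 1$ and $[v,{}_k\, u] \neq 1$ for all positive integers $k$ (i.e., the Engel graph of $G$ is complete). -/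
open Pointwise

open scoped commutatorElement


theorem stmt_11 {G : Type*} [Group G] (H : Subgroup G)
    (hH : ∀ g : G, g ∈ H ↔ IsLeftEngel G g) (hne : H ≠ ⊤)
    (hnorm : H.Normal) (hab : ∀ u ∈ H, ∀ v ∈ H, u * v = v * u)
    (h2 : ∀ u ∈ H, u ^ 2 = 1 → u = 1)
    (x : G) (hx : x ∉ H) (hx2 : x ^ 2 = 1)
    (htop : H ⊔ Subgroup.zpowers x = ⊤) (hint : H ⊓ Subgroup.zpowers x = ⊥)
    (hinv : ∀ g ∈ H, x⁻¹ * g * x = g⁻¹) :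
    ∀ u v : G, u ∉ H → v ∉ H → u ≠ v →
      ∀ k : ℕ, 0 < k → engel u v k ≠ 1 ∧ engel v u k ≠ 1 := by
  have hxx : x * x = 1 := by rw [← sq]; exact hx2
  have hxi : x⁻¹ = x := by rw [inv_eq_iff_mul_eq_one]; exact hxx
  have hswap : ∀ g ∈ H, x * g = g⁻¹ * x := by
    intro g hg
    have h := hinv g hg
    rw [hxi] at h
    calc x * g = (x * g * x) * x⁻¹ := by group
    _ = g⁻¹ * x := by rw [h, hxi]
  -- decomposition of elements outside H
  have hdec : ∀ u : G, u ∉ H → ∃ a, a ∈ H ∧ u = a * x := by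
    intro u hu
    have hmem : u ∈ H ⊔ Subgroup.zpowers x := htop ▸ Subgroup.mem_top u
    haveI := hnorm
    have hmem' : u ∈ (↑H : Set G) * (↑(Subgroup.zpowers x) : Set G) := by
      rw [← Subgroup.normal_mul]; exact hmem
    obtain ⟨a, ha, y, hy, heq⟩ := hmem'
    obtain ⟨n, rfl⟩ := hy
    have heq' : a * x ^ n = u := heq
    have hpow : x ^ n = 1 ∨ x ^ n = x := by
      have h2z : x ^ (2:ℤ) = 1 := by rw [zpow_two]; exact hxx
      have heq2 : x ^ n = x ^ (n % 2) := by
        conv_lhs => rw [← Int.emod_add_mul_ediv n 2]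
        rw [zpow_add, zpow_mul, h2z, one_zpow, mul_one]
      rcases Int.emod_two_eq n with h | h <;> rw [heq2, h] <;> simp
    rcases hpow with h | h
    · exfalso; rw [h, mul_one] at heq'; exact hu (heq' ▸ ha)
    · exact ⟨a, ha, by rw [← heq', h]⟩
  -- no 2-power torsion in H
  have hno2 : ∀ m : ℕ, ∀ c ∈ H, c ^ (2 ^ m : ℕ) = 1 → c = 1 := by
    intro m
    induction m with
    | zero => intro c _ h; simpa using h
    | succ m ih =>
      intro c hc h
      apply ih c hc
      apply h2 _ (H.pow_mem hc _)
      rw [← pow_mul, ← pow_succ]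
      exact h
  have huu : ∀ g ∈ H, (g * x) * (g * x) = 1 := by
    intro g hg
    calc g * x * (g * x) = g * (x * g) * x := by group
    _ = g * (g⁻¹ * x) * x := by rw [hswap g hg]
    _ = x * x := by group
    _ = 1 := hxx
  -- commutator formulas
  have hBf : ∀ b ∈ H, ∀ g ∈ H, ⁅g, b * x⁆ = g ^ 2 := by
    intro b hb g hg
    have hvi : (b * x)⁻¹ = b * x := by rw [inv_eq_iff_mul_eq_one]; exact huu b hb
    have step : (b * x) * g⁻¹ * (b * x) = g := by
      calc b * x * g⁻¹ * (b * x) = b * (x * g⁻¹) * (b * x) := by group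
      _ = b * (g⁻¹⁻¹ * x) * (b * x) := by rw [hswap g⁻¹ (H.inv_mem hg)]
      _ = b * g * (x * b) * x := by group
      _ = b * g * (b⁻¹ * x) * x := by rw [hswap b hb]
      _ = b * g * b⁻¹ * (x * x) := by group
      _ = b * g * b⁻¹ := by rw [hxx, mul_one]
      _ = g := by rw [hab b hb g hg]; group
    calc ⁅g, b * x⁆ = g * (b * x) * g⁻¹ * (b * x)⁻¹ := commutatorElement_def g (b * x)
    _ = g * ((b * x) * g⁻¹ * (b * x)) := by rw [hvi]; group
    _ = g ^ 2 := by rw [step, sq]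
  have hAf : ∀ a ∈ H, ∀ b ∈ H, ⁅a * x, b * x⁆ = (a * b⁻¹) ^ 2 := by
    intro a ha b hb
    have hui : (a * x)⁻¹ = a * x := by rw [inv_eq_iff_mul_eq_one]; exact huu a ha
    have hvi : (b * x)⁻¹ = b * x := by rw [inv_eq_iff_mul_eq_one]; exact huu b hb
    have hmul : (a * x) * (b * x) = a * b⁻¹ := by
      calc a * x * (b * x) = a * (x * b) * x := by group
      _ = a * (b⁻¹ * x) * x := by rw [hswap b hb]
      _ = a * b⁻¹ * (x * x) := by group
      _ = a * b⁻¹ := by rw [hxx, mul_one]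
    calc ⁅a * x, b * x⁆ = (a*x) * (b*x) * (a*x)⁻¹ * (b*x)⁻¹ :=
          commutatorElement_def (a * x) (b * x)
    _ = ((a*x) * (b*x)) * ((a*x) * (b*x)) := by rw [hui, hvi]; group
    _ = (a * b⁻¹) ^ 2 := by rw [hmul, sq]
  -- engel formula
  have hengel : ∀ a ∈ H, ∀ b ∈ H, ∀ k : ℕ,
      engel (a * x) (b * x) (k + 1) = ((a * b⁻¹) ^ 2) ^ (2 ^ k : ℕ) := by
    intro a ha b hb k
    induction k with
    | zero =>
      show ⁅engel (a*x) (b*x) 0, b*x⁆ = _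
      rw [pow_zero, pow_one]
      exact hAf a ha b hb
    | succ k ih =>
      show ⁅engel (a*x) (b*x) (k+1), b*x⁆ = _
      rw [ih]
      have hcH : ((a * b⁻¹) ^ 2) ^ (2 ^ k : ℕ) ∈ H :=
        H.pow_mem (H.pow_mem (H.mul_mem ha (H.inv_mem hb)) 2) _
      rw [hBf b hb _ hcH, ← pow_mul, ← pow_succ]
  -- nontriviality
  have hmain : ∀ a ∈ H, ∀ b ∈ H, a ≠ b → ∀ k : ℕ, 0 < k →
      engel (a * x) (b * x) k ≠ 1 := by
    intro a ha b hb hab' k hk heq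
    obtain ⟨j, rfl⟩ := Nat.exists_eq_add_of_lt hk
    rw [Nat.zero_add] at heq
    rw [hengel a ha b hb j] at heq
    have hcH : (a * b⁻¹) ^ 2 ∈ H := H.pow_mem (H.mul_mem ha (H.inv_mem hb)) 2
    have hc1 : (a * b⁻¹) ^ 2 = 1 := hno2 j _ hcH heq
    have : a * b⁻¹ = 1 := h2 _ (H.mul_mem ha (H.inv_mem hb)) hc1
    exact hab' (by rwa [mul_inv_eq_one] at this)
  intro u v hu hv huv k hk
  obtain ⟨a, ha, rfl⟩ := hdec u hu
  obtain ⟨b, hb, rfl⟩ := hdec v hv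
  have hab' : a ≠ b := fun h => huv (by rw [h])
  exact ⟨hmain a ha b hb hab' k hk, hmain b hb a ha (Ne.symm hab') k hk⟩
end
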